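/- Let f : X ⟶ Y be a morphism of schemes. Suppose there exists an open cover of Y by affine open subschemes V_i and, for each i, an open cover of f⁻¹(V_i) by affine open subschemes U_{i,j}, such that O_X(U_{i,j}) is an O_Y(V_i)-algebra of finite expansion for all i, j. Then for every affine open subscheme V ⊆ Y and every affine open subscheme U ⊆ f⁻¹(V), the ring O_X(U) is an O_Y(V)-algebra of finite expansion. -/

import Mathlib

open AlgebraicGeometry CategoryTheory

/-- An `R`-algebra `A` is of *finite expansion* if it is integral over a finitely
generated subalgebra, i.e. there is a finite set of quasi-generators. -/
def Algebra.FiniteExpansion (R A : Type*) [CommRing R] [CommRing A] [Algebra R A] : Prop :=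
  ∃ s : Finset A, Algebra.IsIntegral (Algebra.adjoin R (s : Set A)) A

/-- A ring homomorphism is of finite expansion if it makes the target an algebra of finite
expansion over the source. -/
def RingHom.FiniteExpansion {R A : Type*} [CommRing R] [CommRing A] (f : R →+* A) : Prop :=
  @Algebra.FiniteExpansion R A _ _ f.toAlgebra

/-- A morphism of schemes is of finite expansion if it is quasi-compact and the induced ring
maps on all compatible pairs of affine opens are of finite expansion. -/
def AlgebraicGeometry.Scheme.Hom.FiniteExpansion {X Y : Scheme} (f : X.Hom Y) : Prop :=
  QuasiCompact f ∧ ∀ (V : Y.affineOpens) (U : X.affineOpens) (e : U.1 ≤ f ⁻¹ᵁ V.1),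
    (f.appLE V U e).hom.FiniteExpansion

/-! ### Auxiliary ring-theoretic lemmas -/

open TopologicalSpace

section RingTheory

open Polynomial

/-- An element of a subring is integral over it. -/
theorem FE.isIntegral_of_mem {S : Type*} [CommRing S] (B : Subring S) {x : S} (h : x ∈ B) :
    IsIntegral B x :=
  show IsIntegral B (algebraMap B S ⟨x, h⟩) from isIntegral_algebraMap

/-- Monotonicity of integrality along a ring hom mapping one subring into another. -/
theorem FE.isIntegral_map_subring {S S' : Type*} [CommRing S] [CommRing S'] (φ : S →+* S')
    {B : Subring S} {B' : Subring S'} (h : ∀ x ∈ B, φ x ∈ B') {x : S}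
    (hx : IsIntegral B x) : IsIntegral B' (φ x) := by
  obtain ⟨p, hp, hp0⟩ := hx
  refine ⟨p.map (φ.restrict B B' h), hp.map _, ?_⟩
  have : (B'.subtype).comp (φ.restrict B B' h) = φ.comp B.subtype := by ext; rfl
  rw [show (algebraMap B' S' : B' →+* S') = B'.subtype from rfl, eval₂_map, this, ← hom_eval₂]
  exact (congrArg φ hp0).trans (map_zero φ)

theorem FE.isIntegral_mono {S : Type*} [CommRing S] {B B' : Subring S} (h : B ≤ B') {x : S}
    (hx : IsIntegral B x) : IsIntegral B' x :=
  FE.isIntegral_map_subring (RingHom.id S) (fun _ hy => h hy) hx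

/-- If an element is integral over the range of a ring hom, it is an integral element
for that ring hom. -/
theorem FE.isIntegralElem_of_range {S S' : Type*} [CommRing S] [CommRing S'] (g : S →+* S')
    {z : S'} (h : IsIntegral g.range z) : g.IsIntegralElem z := by
  cases subsingleton_or_nontrivial S' with
  | inl _ => exact ⟨X, monic_X, Subsingleton.elim _ _⟩
  | inr _ =>
    obtain ⟨p, hp, hp0⟩ := h
    have hl : p.map (g.range.subtype) ∈ lifts g := by
      rw [lifts_iff_coeff_lifts]; intro n; obtain ⟨y, hy⟩ := RingHom.mem_range.mp (p.coeff n).2; exact ⟨y, by simpa using hy⟩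
    obtain ⟨q, hq, _, hqm⟩ := lifts_and_degree_eq_and_monic hl (hp.map _)
    refine ⟨q, hqm, ?_⟩
    show eval₂ g z q = 0
    rw [eval₂_eq_eval_map, hq, ← eval₂_eq_eval_map]
    exact hp0

/-- Characterization of finite expansion via subrings. -/
theorem FE.finiteExpansion_iff {R S : Type*} [CommRing R] [CommRing S] (f : R →+* S) :
    f.FiniteExpansion ↔ ∃ u : Set S, u.Finite ∧
      ∀ x : S, IsIntegral (Subring.closure (Set.range f ∪ u)) x := by
  letI := f.toAlgebra
  have hrange : Set.range (algebraMap R S) = Set.range f := rfl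
  constructor
  · rintro ⟨s, hs⟩
    refine ⟨s, s.finite_toSet, fun x => ?_⟩
    have := hs.isIntegral x
    rwa [show Subring.closure (Set.range f ∪ ↑s) = (Algebra.adjoin R (s : Set S)).toSubring by
      rw [Algebra.adjoin_eq_ring_closure, hrange]]
  · rintro ⟨u, hu, h⟩
    refine ⟨hu.toFinset, ⟨fun x => ?_⟩⟩
    have := h x
    rwa [show Subring.closure (Set.range f ∪ u) =
        (Algebra.adjoin R (hu.toFinset : Set S)).toSubring by
      rw [Algebra.adjoin_eq_ring_closure, hrange, hu.coe_toFinset]] at this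

/-- In a localization away from `r`, every element is `φ x * invSelf ^ n`. -/
theorem FE.away_decomp {S T : Type*} [CommRing S] [CommRing T] [Algebra S T] (r : S)
    [IsLocalization.Away r T] (z : T) :
    ∃ (x : S) (n : ℕ), z = algebraMap S T x * (IsLocalization.Away.invSelf (S := T) r) ^ n := by
  obtain ⟨⟨x, ⟨-, n, rfl⟩⟩, hz⟩ := IsLocalization.surj (Submonoid.powers r) z
  refine ⟨x, n, ?_⟩
  have h1 : algebraMap S T r * IsLocalization.Away.invSelf (S := T) r = 1 :=
    IsLocalization.Away.mul_invSelf r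
  calc z = z * ((algebraMap S T r * IsLocalization.Away.invSelf (S := T) r) ^ n) := by
        rw [h1]; ring
    _ = (z * algebraMap S T (r ^ n)) * IsLocalization.Away.invSelf (S := T) r ^ n := by
        rw [map_pow]; ring
    _ = algebraMap S T x * IsLocalization.Away.invSelf (S := T) r ^ n := by rw [hz]

theorem FE.localizationAwayPreserves :
    RingHom.LocalizationAwayPreserves @RingHom.FiniteExpansion := by
  introv R hf
  rw [FE.finiteExpansion_iff] at hf ⊢
  obtain ⟨u, hu, h⟩ := hf
  set F := IsLocalization.Away.map R' S' f r with hF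
  set φ := algebraMap S S' with hφ
  set t := IsLocalization.Away.invSelf (S := S') (f r) with ht
  refine ⟨φ '' u ∪ {t}, (hu.image φ).union (Set.finite_singleton t), fun z => ?_⟩
  set B' := Subring.closure (Set.range F ∪ (φ '' u ∪ {t})) with hB'
  have hmap : ∀ x ∈ Subring.closure (Set.range f ∪ u), φ x ∈ B' := by
    intro x hx
    refine (Subring.closure_le (t := B'.comap φ)).mpr ?_ hx
    rintro y (⟨a, rfl⟩ | hy)
    · refine Subring.subset_closure (Or.inl ⟨algebraMap R R' a, ?_⟩)
      exact IsLocalization.map_eq _ a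
    · exact Subring.subset_closure (Or.inr (Or.inl ⟨y, hy, rfl⟩))
  have htB : t ∈ B' := Subring.subset_closure (Or.inr (Or.inr rfl))
  obtain ⟨x, n, rfl⟩ := FE.away_decomp (f r) z
  exact (FE.isIntegral_map_subring φ hmap (h x)).mul ((FE.isIntegral_of_mem B' htB).pow n)

theorem FE.stableUnderCompositionWithLocalizationAwayTarget :
    RingHom.StableUnderCompositionWithLocalizationAwayTarget @RingHom.FiniteExpansion := by
  intro R S T _ _ _ _ s _ f h
  rw [FE.finiteExpansion_iff] at h ⊢
  obtain ⟨u, hu, hint⟩ := h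
  set φ := algebraMap S T with hφ
  set t := IsLocalization.Away.invSelf (S := T) s with ht
  refine ⟨φ '' u ∪ {t}, (hu.image φ).union (Set.finite_singleton t), fun z => ?_⟩
  set B' := Subring.closure (Set.range (φ.comp f) ∪ (φ '' u ∪ {t})) with hB'
  have hmap : ∀ x ∈ Subring.closure (Set.range f ∪ u), φ x ∈ B' := by
    intro x hx
    refine (Subring.closure_le (t := B'.comap φ)).mpr ?_ hx
    rintro y (⟨a, rfl⟩ | hy)
    · exact Subring.subset_closure (Or.inl ⟨a, rfl⟩)
    · exact Subring.subset_closure (Or.inr (Or.inl ⟨y, hy, rfl⟩))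
  have htB : t ∈ B' := Subring.subset_closure (Or.inr (Or.inr rfl))
  obtain ⟨x, n, rfl⟩ := FE.away_decomp s z
  exact (FE.isIntegral_map_subring φ hmap (hint x)).mul ((FE.isIntegral_of_mem B' htB).pow n)

theorem FE.stableUnderCompositionWithLocalizationAwaySource :
    RingHom.StableUnderCompositionWithLocalizationAwaySource @RingHom.FiniteExpansion := by
  intro R S T _ _ _ _ r _ f h
  rw [FE.finiteExpansion_iff] at h ⊢
  obtain ⟨u, hu, hint⟩ := h
  set t := f (IsLocalization.Away.invSelf (S := S) r) with ht
  refine ⟨u ∪ {t}, hu.union (Set.finite_singleton t), fun x => ?_⟩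
  refine FE.isIntegral_mono ?_ (hint x)
  rw [Subring.closure_le]
  rintro y (⟨a, rfl⟩ | hy)
  · obtain ⟨x₀, n, rfl⟩ := FE.away_decomp r a
    have h₁ : f (algebraMap R S x₀) ∈
        Subring.closure (Set.range (f.comp (algebraMap R S)) ∪ (u ∪ {t})) :=
      Subring.subset_closure (Or.inl ⟨x₀, rfl⟩)
    have h₂ : t ∈ Subring.closure (Set.range (f.comp (algebraMap R S)) ∪ (u ∪ {t})) :=
      Subring.subset_closure (Or.inr (Or.inr rfl))
    rw [map_mul, map_pow]
    exact mul_mem h₁ (pow_mem h₂ n)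
  · exact Subring.subset_closure (Or.inr (Or.inl hy))

theorem FE.ofLocalizationSpanTarget :
    RingHom.OfLocalizationSpanTarget @RingHom.FiniteExpansion := by
  rw [RingHom.ofLocalizationSpanTarget_iff_finite]
  introv R hs H
  -- extract the data from the hypotheses
  choose u hufin hu using fun r : s => (FE.finiteExpansion_iff _).mp (H r)
  choose num pow hnum using fun (r : s) (y : Localization.Away (r : S)) =>
    FE.away_decomp (r : S) y
  -- the coefficients of a partition of unity
  obtain ⟨c, -, hc⟩ := Submodule.mem_span_finset.mp
    (show (1 : S) ∈ Ideal.span (s : Set S) by rw [hs]; trivial)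
  -- the finite set of quasi-generators
  set u₀ : Set S := ↑s ∪ ((⋃ r : s, num r '' (u r)) ∪ c '' ↑s) with hu₀
  have hu₀fin : u₀.Finite := by
    refine (s.finite_toSet.union (Set.Finite.union ?_ (s.finite_toSet.image c)))
    exact Set.finite_iUnion fun r => (hufin r).image _
  rw [FE.finiteExpansion_iff]
  refine ⟨u₀, hu₀fin, ?_⟩
  set B := Subring.closure (Set.range f ∪ u₀) with hB
  have hsB : ∀ r ∈ s, r ∈ B := fun r hr => Subring.subset_closure (Or.inr (Or.inl hr))
  have hcB : ∀ r ∈ s, c r ∈ B := fun r hr =>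
    Subring.subset_closure (Or.inr (Or.inr (Or.inr ⟨r, hr, rfl⟩)))
  have hnumB : ∀ (r : s) (y : Localization.Away (r : S)), y ∈ u r → num r y ∈ B := by
    intro r y hy
    exact Subring.subset_closure (Or.inr (Or.inr (Or.inl (Set.mem_iUnion.mpr ⟨r, ⟨y, hy, rfl⟩⟩))))
  have hfB : ∀ a : R, f a ∈ B := fun a => Subring.subset_closure (Or.inl ⟨a, rfl⟩)
  -- the set of generators inside `B`
  set s' : Set B := {x : B | (x : S) ∈ s} with hs'
  have hspan : Ideal.span s' = ⊤ := by
    rw [Ideal.eq_top_iff_one]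
    have h1 : (1 : B) = ∑ r ∈ s.attach,
        (⟨c r, hcB r r.2⟩ : B) * (⟨(r : S), hsB r r.2⟩ : B) := by
      apply Subtype.ext
      push_cast
      rw [Finset.sum_attach s (fun r => c r * r)]
      rw [← hc]
      simp [smul_eq_mul]
    rw [h1]
    refine Ideal.sum_mem _ fun r _ => Ideal.mul_mem_left _ _ (Ideal.subset_span ?_)
    exact r.2
  have hint : RingHom.IsIntegral B.subtype := by
    apply RingHom.isIntegral_ofLocalizationSpan B.subtype s' hspan
    rintro ⟨r, hrs⟩
    intro z
    set g := Localization.awayMap B.subtype r with hg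
    apply FE.isIntegralElem_of_range
    have hrange : ∀ b : B, (algebraMap S (Localization.Away (B.subtype r)) (b : S)) ∈ g.range :=
      fun b => ⟨algebraMap B _ b, IsLocalization.map_eq _ b⟩
    have hC : Subring.closure
        (Set.range ((algebraMap S (Localization.Away ((⟨(r : S), hrs⟩ : s) : S))).comp f) ∪
          u ⟨(r : S), hrs⟩) ≤ g.range := by
      refine Subring.closure_le.mpr ?_
      rintro y (⟨a, rfl⟩ | hy)
      · exact hrange ⟨f a, hfB a⟩
      · have hinv : IsLocalization.Away.invSelf
            (S := Localization.Away ((⟨(r : S), hrs⟩ : s) : S)) (r : S) ∈ g.range := by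
          refine ⟨IsLocalization.Away.invSelf (S := Localization.Away r) r, ?_⟩
          rw [IsLocalization.Away.invSelf, IsLocalization.Away.invSelf]
          refine (IsLocalization.map_mk' _ _ _).trans ?_
          simp
          rfl
        have := hnum ⟨(r : S), hrs⟩ y
        rw [this]
        exact mul_mem (hrange ⟨num _ y, hnumB _ y hy⟩) (pow_mem hinv _)
    exact FE.isIntegral_mono hC (hu ⟨(r : S), hrs⟩ z)
  exact fun x => hint x

theorem FE.propertyIsLocal : RingHom.PropertyIsLocal @RingHom.FiniteExpansion where
  localizationAwayPreserves := FE.localizationAwayPreserves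
  ofLocalizationSpanTarget := FE.ofLocalizationSpanTarget
  ofLocalizationSpan := FE.ofLocalizationSpanTarget.ofLocalizationSpan
    FE.stableUnderCompositionWithLocalizationAwaySource
  StableUnderCompositionWithLocalizationAwayTarget :=
    FE.stableUnderCompositionWithLocalizationAwayTarget

end RingTheory

instance FE.hasRingHomProperty :
    HasRingHomProperty (affineLocally @RingHom.FiniteExpansion) @RingHom.FiniteExpansion where
  isLocal_ringHomProperty := FE.propertyIsLocal
  eq_affineLocally' := rfl

/-- Being of finite expansion on ring sections can be checked on affine open covers:
if there is an affine open cover `V i` of `Y` and affine open covers `U i j` of each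
`f ⁻¹ᵁ V i` such that the induced ring maps are of finite expansion, then the induced ring
map on any pair of affine opens `U ≤ f ⁻¹ᵁ V` is of finite expansion. -/
theorem finiteExpansion_of_affine_cover {X Y : Scheme} (f : X ⟶ Y)
    {ι : Type*} (V : ι → Y.affineOpens) (hV : ⨆ i, (V i).1 = ⊤)
    {κ : ι → Type*} (U : ∀ i, κ i → X.affineOpens)
    (hle : ∀ i j, (U i j).1 ≤ f ⁻¹ᵁ (V i).1)
    (hU : ∀ i, ⨆ j, (U i j).1 = f ⁻¹ᵁ (V i).1)
    (H : ∀ i j, (f.appLE (V i) (U i j) (hle i j)).hom.FiniteExpansion) :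
    ∀ (V' : Y.affineOpens) (U' : X.affineOpens) (e : U'.1 ≤ f ⁻¹ᵁ V'.1),
      (f.appLE V' U' e).hom.FiniteExpansion := by
  have key : affineLocally @RingHom.FiniteExpansion f := by
    apply IsZariskiLocalAtTarget.of_iSup_eq_top (fun i => (V i).1) hV
    intro i
    haveI : IsAffine ((V i).1.toScheme) := (V i).2
    set W : κ i → (f ⁻¹ᵁ (V i).1).toScheme.affineOpens :=
      fun j => (affineOpensRestrict (f ⁻¹ᵁ (V i).1)).symm ⟨U i j, hle i j⟩ with hW
    have hWtop : (⨆ j, (W j).1) = ⊤ := by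
      simp only [hW, affineOpensRestrict_symm_apply_coe]
      rw [← Scheme.Hom.preimage_iSup, hU i, Scheme.Opens.ι_preimage_self]
    apply HasRingHomProperty.of_iSup_eq_top
      (P := affineLocally @RingHom.FiniteExpansion) W hWtop
    intro j
    erw [morphismRestrict_appLE]
    have hWj := (affineOpensRestrict (f ⁻¹ᵁ (V i).1)).apply_symm_apply ⟨U i j, hle i j⟩
    exact (f.appLE_congr _ (Scheme.Opens.ι_image_top (V i).1).symm (congr($(hWj).1.1)).symm
      (fun g => g.hom.FiniteExpansion)).mp (H i j)
  intro V' U' e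
  exact HasRingHomProperty.appLE (affineLocally @RingHom.FiniteExpansion) f key V' U' e
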